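/- Fix an integer r ≥ 2. Let I be an instance of (3,B2)-SAT with variables x₁,…,xₙ and clauses c₁,…,c_m. For 1 ≤ k < r, let B_k(v) denote the tree of depth 2 with root v, in which v has k children and each child has r children (leaves), and let F_{B_k(v)} be a set of k of its edges containing, for each child w of v, exactly one edge joining w to one of its leaf children. Build the finite simple graph G = (V,E) with permitted edge set U ⊆ E as follows. For each clause c, attach a block B_{r−2}(c) rooted at a vertex c, with forbidden edges F_{B_{r−2}(c)}. For each variable x, take four special vertices x, x', ¬x, ¬x', give each of x and ¬x its own r−2 pendant neighbours, join both x' and ¬x' to r common vertices v_x¹,…,v_xʳ, add the forbidden edges xx' and ¬x¬x', and attach to each v_xⁱ a block B_{r−1}(v_xⁱ) rooted at v_xⁱ with forbidden edges F_{B_{r−1}(v_xⁱ)}. Add a permitted crossing edge xc whenever x occurs positively in clause c, and ¬xc whenever x occurs negatively in c. Let U be the set of all edges of G that are not forbidden. Then I is satisfiable if and only if G has a maximal r-DCPS set S with S ⊆ U. -/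
import Mathlib


/-- Vertices of the graph built from a (3,B2)-SAT instance for Ext r-DCPS.
For each clause `c`: the root `cl c` of a block `B_{r−2}(c)` with children
`clChild c a` (`a : Fin (r−2)`) and leaves `clLeaf c a t` (`t : Fin r`).
For each variable `x`: the four special vertices `x, x', ¬x, ¬x'`, the pendant
neighbours `xPend x a`, `nxPend x a` (`a : Fin (r−2)`), the `r` common vertices
`vx x t` (`t : Fin r`), and for each `vx x t` a block `B_{r−1}(vx x t)` with children
`bChild x t a` (`a : Fin (r−1)`) and leaves `bLeaf x t a u` (`u : Fin r`). -/
inductive V15 (n m r : ℕ) : Type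
  | cl : Fin m → V15 n m r
  | clChild : Fin m → Fin (r - 2) → V15 n m r
  | clLeaf : Fin m → Fin (r - 2) → Fin r → V15 n m r
  | x : Fin n → V15 n m r
  | x' : Fin n → V15 n m r
  | nx : Fin n → V15 n m r
  | nx' : Fin n → V15 n m r
  | xPend : Fin n → Fin (r - 2) → V15 n m r
  | nxPend : Fin n → Fin (r - 2) → V15 n m r
  | vx : Fin n → Fin r → V15 n m r
  | bChild : Fin n → Fin r → Fin (r - 1) → V15 n m r
  | bLeaf : Fin n → Fin r → Fin (r - 1) → Fin r → V15 n m r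

/-- All edges of the constructed graph (permitted and forbidden),
including the crossing edges `x c` / `¬x c` for positive / negative occurrences. -/
def E15 (n m r : ℕ) (lit : Fin m → Fin 3 → Fin n × Bool) :
    Set (Sym2 (V15 n m r)) :=
  {e | (∃ (j : Fin m) (a : Fin (r - 2)), e = s(V15.cl j, V15.clChild j a)) ∨
       (∃ (j : Fin m) (a : Fin (r - 2)) (t : Fin r),
          e = s(V15.clChild j a, V15.clLeaf j a t)) ∨
       (∃ (i : Fin n) (a : Fin (r - 2)),
          e = s(V15.x i, V15.xPend i a) ∨ e = s(V15.nx i, V15.nxPend i a)) ∨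
       (∃ (i : Fin n) (t : Fin r),
          e = s(V15.x' i, V15.vx i t) ∨ e = s(V15.nx' i, V15.vx i t)) ∨
       (∃ i : Fin n, e = s(V15.x i, V15.x' i) ∨ e = s(V15.nx i, V15.nx' i)) ∨
       (∃ (i : Fin n) (t : Fin r) (a : Fin (r - 1)),
          e = s(V15.vx i t, V15.bChild i t a)) ∨
       (∃ (i : Fin n) (t : Fin r) (a : Fin (r - 1)) (u : Fin r),
          e = s(V15.bChild i t a, V15.bLeaf i t a u)) ∨
       (∃ (i : Fin n) (j : Fin m) (k : Fin 3),
          lit j k = (i, true) ∧ e = s(V15.x i, V15.cl j)) ∨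
       (∃ (i : Fin n) (j : Fin m) (k : Fin 3),
          lit j k = (i, false) ∧ e = s(V15.nx i, V15.cl j))}

/-- The forbidden edges: for each block, for each child, exactly one edge to a leaf
(selected by the choice functions `fC`, `fB`), together with the edges `xx'`, `¬x¬x'`. -/
def Forb15 (n m r : ℕ) (fC : Fin m → Fin (r - 2) → Fin r)
    (fB : Fin n → Fin r → Fin (r - 1) → Fin r) : Set (Sym2 (V15 n m r)) :=
  {e | (∃ (j : Fin m) (a : Fin (r - 2)),
          e = s(V15.clChild j a, V15.clLeaf j a (fC j a))) ∨
       (∃ i : Fin n, e = s(V15.x i, V15.x' i) ∨ e = s(V15.nx i, V15.nx' i)) ∨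
       (∃ (i : Fin n) (t : Fin r) (a : Fin (r - 1)),
          e = s(V15.bChild i t a, V15.bLeaf i t a (fB i t a)))}


namespace Stmt15
open V15

variable {n m r : ℕ}

/-- The set of edges of `S` incident to `v`. -/
def star (S : Set (Sym2 (V15 n m r))) (v : V15 n m r) : Set (Sym2 (V15 n m r)) :=
  {e ∈ S | v ∈ e}

lemma mem_star {S : Set (Sym2 (V15 n m r))} {v : V15 n m r} {e} :
    e ∈ star S v ↔ e ∈ S ∧ v ∈ e := Iff.rfl

lemma star_insert_of_mem {S : Set (Sym2 (V15 n m r))} {v : V15 n m r} {e} (hv : v ∈ e) :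
    star (insert e S) v = insert e (star S v) := by
  ext f
  simp only [mem_star, Set.mem_insert_iff]
  constructor
  · rintro ⟨rfl | hf, hvf⟩
    · exact Or.inl rfl
    · exact Or.inr ⟨hf, hvf⟩
  · rintro (rfl | ⟨hf, hvf⟩)
    · exact ⟨Or.inl rfl, hv⟩
    · exact ⟨Or.inr hf, hvf⟩

lemma star_insert_of_notMem {S : Set (Sym2 (V15 n m r))} {v : V15 n m r} {e} (hv : v ∉ e) :
    star (insert e S) v = star S v := by
  ext f
  simp only [mem_star, Set.mem_insert_iff]
  constructor
  · rintro ⟨rfl | hf, hvf⟩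
    · exact absurd hvf hv
    · exact ⟨hf, hvf⟩
  · rintro ⟨hf, hvf⟩
    exact ⟨Or.inr hf, hvf⟩

/-- If `v` is an endpoint of `e ∉ S` with full star, then adding `e` breaks the degree bound. -/
lemma not_le_of_full {S : Set (Sym2 (V15 n m r))} {e} {v : V15 n m r}
    (hv : v ∈ e) (he : e ∉ S) (hfin : (star S v).Finite) (hcard : r ≤ (star S v).ncard) :
    ¬ ∀ w : V15 n m r, ({f ∈ insert e S | w ∈ f}).ncard ≤ r := by
  intro h
  have h1 : ({f ∈ insert e S | v ∈ f}).ncard = (star S v).ncard + 1 := by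
    have : {f ∈ insert e S | v ∈ f} = insert e (star S v) := star_insert_of_mem hv
    rw [this, Set.ncard_insert_of_notMem (fun hc => he hc.1) hfin]
  have := h v
  omega

/-- From maximality-breaking, extract an endpoint with full star. -/
lemma exists_full {S : Set (Sym2 (V15 n m r))} (hdeg : ∀ v : V15 n m r, (star S v).ncard ≤ r)
    {e} (he : e ∉ S)
    (h : ¬ ∀ w : V15 n m r, ({f ∈ insert e S | w ∈ f}).ncard ≤ r) :
    ∃ v : V15 n m r, v ∈ e ∧ (star S v).ncard = r := by
  push_neg at h
  obtain ⟨v, hv⟩ := h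
  by_cases hve : v ∈ e
  · refine ⟨v, hve, ?_⟩
    have h1 : {f ∈ insert e S | v ∈ f} = insert e (star S v) := star_insert_of_mem hve
    rw [h1] at hv
    have h2 := Set.ncard_insert_le e (star S v)
    have := hdeg v
    omega
  · have h1 : {f ∈ insert e S | v ∈ f} = star S v := star_insert_of_notMem hve
    rw [h1] at hv
    have := hdeg v
    omega

lemma ncard_range_fin {α : Type*} {k : ℕ} {f : Fin k → α} (hf : Function.Injective f) :
    (Set.range f).ncard = k := by
  rw [← Set.image_univ, Set.ncard_image_of_injOn hf.injOn, Set.ncard_univ]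
  simp

lemma ncard_ne {k : ℕ} (c : Fin k) : {t : Fin k | t ≠ c}.ncard = k - 1 := by
  have h : {t : Fin k | t ≠ c} = Set.univ \ {c} := by ext t; simp
  rw [h, Set.ncard_diff (Set.subset_univ _) (Set.toFinite _)]
  simp [Set.ncard_univ]

section Fwd
variable (lit : Fin m → Fin 3 → Fin n × Bool) (fC : Fin m → Fin (r - 2) → Fin r)
  (fB : Fin n → Fin r → Fin (r - 1) → Fin r) (T : Fin n → Bool) (K : Fin m → Fin 3)

/-- The vertex of the `k`-th literal of clause `j`. -/
def litV (j : Fin m) (k : Fin 3) : V15 n m r :=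
  if (lit j k).2 then V15.x (lit j k).1 else V15.nx (lit j k).1

lemma litV_ne_cl (j j' : Fin m) (k : Fin 3) : litV (r := r) lit j k ≠ V15.cl j' := by
  unfold litV; split <;> simp

lemma litV_inj (hdist : ∀ j : Fin m, Function.Injective fun k : Fin 3 => (lit j k).1)
    {j : Fin m} {k k' : Fin 3} (h : litV (r := r) lit j k = litV lit j k') : k = k' := by
  unfold litV at h
  split at h <;> split at h <;> simp_all <;> exact hdist j h

/-- The forward r-DCPS set built from assignment `T` and selector `K` of true literals. -/
def SF : Set (Sym2 (V15 n m r)) :=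
  {e | (∃ (j : Fin m) (a : Fin (r - 2)), e = s(V15.cl j, V15.clChild j a)) ∨
       (∃ (j : Fin m) (a : Fin (r - 2)) (t : Fin r),
          t ≠ fC j a ∧ e = s(V15.clChild j a, V15.clLeaf j a t)) ∨
       (∃ (i : Fin n) (a : Fin (r - 2)), e = s(V15.x i, V15.xPend i a)) ∨
       (∃ (i : Fin n) (a : Fin (r - 2)), e = s(V15.nx i, V15.nxPend i a)) ∨
       (∃ (i : Fin n) (t : Fin r), T i = true ∧ e = s(V15.x' i, V15.vx i t)) ∨
       (∃ (i : Fin n) (t : Fin r), T i = false ∧ e = s(V15.nx' i, V15.vx i t)) ∨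
       (∃ (i : Fin n) (t : Fin r) (a : Fin (r - 1)), e = s(V15.vx i t, V15.bChild i t a)) ∨
       (∃ (i : Fin n) (t : Fin r) (a : Fin (r - 1)) (u : Fin r),
          u ≠ fB i t a ∧ e = s(V15.bChild i t a, V15.bLeaf i t a u)) ∨
       (∃ (i : Fin n) (j : Fin m) (k : Fin 3),
          k ≠ K j ∧ lit j k = (i, true) ∧ e = s(V15.x i, V15.cl j)) ∨
       (∃ (i : Fin n) (j : Fin m) (k : Fin 3),
          k ≠ K j ∧ lit j k = (i, false) ∧ e = s(V15.nx i, V15.cl j))}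

lemma star_cl (j : Fin m) :
    star (SF lit fC fB T K) (V15.cl j) =
      (Set.range fun a : Fin (r - 2) => s(V15.cl j, V15.clChild j a)) ∪
      ((fun k => s(litV lit j k, V15.cl j)) '' {k : Fin 3 | k ≠ K j}) := by
  ext f
  constructor
  · rintro ⟨hf, hv⟩
    rcases hf with ⟨j', a, rfl⟩ | ⟨j', a, t, ht, rfl⟩ | ⟨i, a, rfl⟩ | ⟨i, a, rfl⟩ |
      ⟨i, t, hT, rfl⟩ | ⟨i, t, hT, rfl⟩ | ⟨i, t, a, rfl⟩ | ⟨i, t, a, u, hu, rfl⟩ |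
      ⟨i, j', k, hk, hl, rfl⟩ | ⟨i, j', k, hk, hl, rfl⟩ <;> simp at hv
    · subst hv
      exact Or.inl ⟨a, rfl⟩
    · subst hv
      refine Or.inr ⟨k, hk, ?_⟩
      simp [litV, hl]
    · subst hv
      refine Or.inr ⟨k, hk, ?_⟩
      simp [litV, hl]
  · rintro (⟨a, rfl⟩ | ⟨k, hk, rfl⟩)
    · exact ⟨Or.inl ⟨j, a, rfl⟩, by simp⟩
    · rcases h2 : (lit j k).2 with _ | _
      · refine ⟨Or.inr (Or.inr (Or.inr (Or.inr (Or.inr (Or.inr (Or.inr (Or.inr (Or.inr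
          ⟨(lit j k).1, j, k, hk, ?_, by simp [litV, h2]⟩)))))))), by simp [litV, h2]⟩
        exact Prod.ext rfl h2
      · refine ⟨Or.inr (Or.inr (Or.inr (Or.inr (Or.inr (Or.inr (Or.inr (Or.inr (Or.inl
          ⟨(lit j k).1, j, k, hk, ?_, by simp [litV, h2]⟩)))))))), by simp [litV, h2]⟩
        exact Prod.ext rfl h2

lemma star_clChild (j : Fin m) (a : Fin (r - 2)) :
    star (SF lit fC fB T K) (V15.clChild j a) =
      {s(V15.cl j, V15.clChild j a)} ∪
      ((fun t => s(V15.clChild j a, V15.clLeaf j a t)) '' {t : Fin r | t ≠ fC j a}) := by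
  ext f
  constructor
  · rintro ⟨hf, hv⟩
    rcases hf with ⟨j', a', rfl⟩ | ⟨j', a', t, ht, rfl⟩ | ⟨i, a', rfl⟩ | ⟨i, a', rfl⟩ |
      ⟨i, t, hT, rfl⟩ | ⟨i, t, hT, rfl⟩ | ⟨i, t, a', rfl⟩ | ⟨i, t, a', u, hu, rfl⟩ |
      ⟨i, j', k, hk, hl, rfl⟩ | ⟨i, j', k, hk, hl, rfl⟩ <;> simp at hv
    · obtain ⟨rfl, rfl⟩ := hv
      exact Or.inl rfl
    · obtain ⟨rfl, rfl⟩ := hv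
      exact Or.inr ⟨t, ht, rfl⟩
  · rintro (rfl | ⟨t, ht, rfl⟩)
    · exact ⟨Or.inl ⟨j, a, rfl⟩, by simp⟩
    · exact ⟨Or.inr (Or.inl ⟨j, a, t, ht, rfl⟩), by simp⟩

lemma star_clLeaf (j : Fin m) (a : Fin (r - 2)) (t : Fin r) :
    star (SF lit fC fB T K) (V15.clLeaf j a t) ⊆ {s(V15.clChild j a, V15.clLeaf j a t)} := by
  rintro f ⟨hf, hv⟩
  rcases hf with ⟨j', a', rfl⟩ | ⟨j', a', t', ht, rfl⟩ | ⟨i, a', rfl⟩ | ⟨i, a', rfl⟩ |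
    ⟨i, t', hT, rfl⟩ | ⟨i, t', hT, rfl⟩ | ⟨i, t', a', rfl⟩ | ⟨i, t', a', u, hu, rfl⟩ |
    ⟨i, j', k, hk, hl, rfl⟩ | ⟨i, j', k, hk, hl, rfl⟩ <;> simp at hv
  obtain ⟨rfl, rfl, rfl⟩ := hv
  rfl

lemma star_x (i : Fin n) :
    star (SF lit fC fB T K) (V15.x i) =
      (Set.range fun a : Fin (r - 2) => s(V15.x i, V15.xPend i a)) ∪
      ((fun p : Fin m × Fin 3 => s(V15.x (r := r) i, V15.cl p.1)) ''
        {p : Fin m × Fin 3 | p.2 ≠ K p.1 ∧ lit p.1 p.2 = (i, true)}) := by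
  ext f
  constructor
  · rintro ⟨hf, hv⟩
    rcases hf with ⟨j', a', rfl⟩ | ⟨j', a', t, ht, rfl⟩ | ⟨i', a', rfl⟩ | ⟨i', a', rfl⟩ |
      ⟨i', t, hT, rfl⟩ | ⟨i', t, hT, rfl⟩ | ⟨i', t, a', rfl⟩ | ⟨i', t, a', u, hu, rfl⟩ |
      ⟨i', j', k, hk, hl, rfl⟩ | ⟨i', j', k, hk, hl, rfl⟩ <;> simp at hv
    · subst hv
      exact Or.inl ⟨a', rfl⟩
    · subst hv
      exact Or.inr ⟨(j', k), ⟨hk, hl⟩, rfl⟩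
  · rintro (⟨a, rfl⟩ | ⟨⟨j, k⟩, ⟨hk, hl⟩, rfl⟩)
    · exact ⟨Or.inr (Or.inr (Or.inl ⟨i, a, rfl⟩)), by simp⟩
    · exact ⟨Or.inr (Or.inr (Or.inr (Or.inr (Or.inr (Or.inr (Or.inr (Or.inr (Or.inl
        ⟨i, j, k, hk, hl, rfl⟩)))))))), by simp⟩

lemma star_nx (i : Fin n) :
    star (SF lit fC fB T K) (V15.nx i) =
      (Set.range fun a : Fin (r - 2) => s(V15.nx i, V15.nxPend i a)) ∪
      ((fun p : Fin m × Fin 3 => s(V15.nx (r := r) i, V15.cl p.1)) ''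
        {p : Fin m × Fin 3 | p.2 ≠ K p.1 ∧ lit p.1 p.2 = (i, false)}) := by
  ext f
  constructor
  · rintro ⟨hf, hv⟩
    rcases hf with ⟨j', a', rfl⟩ | ⟨j', a', t, ht, rfl⟩ | ⟨i', a', rfl⟩ | ⟨i', a', rfl⟩ |
      ⟨i', t, hT, rfl⟩ | ⟨i', t, hT, rfl⟩ | ⟨i', t, a', rfl⟩ | ⟨i', t, a', u, hu, rfl⟩ |
      ⟨i', j', k, hk, hl, rfl⟩ | ⟨i', j', k, hk, hl, rfl⟩ <;> simp at hv
    · subst hv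
      exact Or.inl ⟨a', rfl⟩
    · subst hv
      exact Or.inr ⟨(j', k), ⟨hk, hl⟩, rfl⟩
  · rintro (⟨a, rfl⟩ | ⟨⟨j, k⟩, ⟨hk, hl⟩, rfl⟩)
    · exact ⟨Or.inr (Or.inr (Or.inr (Or.inl ⟨i, a, rfl⟩))), by simp⟩
    · exact ⟨Or.inr (Or.inr (Or.inr (Or.inr (Or.inr (Or.inr (Or.inr (Or.inr (Or.inr
        ⟨i, j, k, hk, hl, rfl⟩)))))))), by simp⟩

lemma star_x'_true (i : Fin n) (hT : T i = true) :
    star (SF lit fC fB T K) (V15.x' i) =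
      Set.range fun t : Fin r => s(V15.x' i, V15.vx i t) := by
  ext f
  constructor
  · rintro ⟨hf, hv⟩
    rcases hf with ⟨j', a', rfl⟩ | ⟨j', a', t, ht, rfl⟩ | ⟨i', a', rfl⟩ | ⟨i', a', rfl⟩ |
      ⟨i', t, hT', rfl⟩ | ⟨i', t, hT', rfl⟩ | ⟨i', t, a', rfl⟩ | ⟨i', t, a', u, hu, rfl⟩ |
      ⟨i', j', k, hk, hl, rfl⟩ | ⟨i', j', k, hk, hl, rfl⟩ <;> simp at hv
    subst hv
    exact ⟨t, rfl⟩
  · rintro ⟨t, rfl⟩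
    exact ⟨Or.inr (Or.inr (Or.inr (Or.inr (Or.inl ⟨i, t, hT, rfl⟩)))), by simp⟩

lemma star_x'_sub (i : Fin n) :
    star (SF lit fC fB T K) (V15.x' i) ⊆
      Set.range fun t : Fin r => s(V15.x' i, V15.vx i t) := by
  rintro f ⟨hf, hv⟩
  rcases hf with ⟨j', a', rfl⟩ | ⟨j', a', t, ht, rfl⟩ | ⟨i', a', rfl⟩ | ⟨i', a', rfl⟩ |
    ⟨i', t, hT', rfl⟩ | ⟨i', t, hT', rfl⟩ | ⟨i', t, a', rfl⟩ | ⟨i', t, a', u, hu, rfl⟩ |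
    ⟨i', j', k, hk, hl, rfl⟩ | ⟨i', j', k, hk, hl, rfl⟩ <;> simp at hv
  subst hv
  exact ⟨t, rfl⟩

lemma star_nx'_false (i : Fin n) (hT : T i = false) :
    star (SF lit fC fB T K) (V15.nx' i) =
      Set.range fun t : Fin r => s(V15.nx' i, V15.vx i t) := by
  ext f
  constructor
  · rintro ⟨hf, hv⟩
    rcases hf with ⟨j', a', rfl⟩ | ⟨j', a', t, ht, rfl⟩ | ⟨i', a', rfl⟩ | ⟨i', a', rfl⟩ |
      ⟨i', t, hT', rfl⟩ | ⟨i', t, hT', rfl⟩ | ⟨i', t, a', rfl⟩ | ⟨i', t, a', u, hu, rfl⟩ |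
      ⟨i', j', k, hk, hl, rfl⟩ | ⟨i', j', k, hk, hl, rfl⟩ <;> simp at hv
    subst hv
    exact ⟨t, rfl⟩
  · rintro ⟨t, rfl⟩
    exact ⟨Or.inr (Or.inr (Or.inr (Or.inr (Or.inr (Or.inl ⟨i, t, hT, rfl⟩))))), by simp⟩

lemma star_nx'_sub (i : Fin n) :
    star (SF lit fC fB T K) (V15.nx' i) ⊆
      Set.range fun t : Fin r => s(V15.nx' i, V15.vx i t) := by
  rintro f ⟨hf, hv⟩
  rcases hf with ⟨j', a', rfl⟩ | ⟨j', a', t, ht, rfl⟩ | ⟨i', a', rfl⟩ | ⟨i', a', rfl⟩ |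
    ⟨i', t, hT', rfl⟩ | ⟨i', t, hT', rfl⟩ | ⟨i', t, a', rfl⟩ | ⟨i', t, a', u, hu, rfl⟩ |
    ⟨i', j', k, hk, hl, rfl⟩ | ⟨i', j', k, hk, hl, rfl⟩ <;> simp at hv
  subst hv
  exact ⟨t, rfl⟩

lemma star_vx (i : Fin n) (t : Fin r) :
    star (SF lit fC fB T K) (V15.vx i t) =
      {if T i then s(V15.x' i, V15.vx i t) else s(V15.nx' i, V15.vx i t)} ∪
      Set.range fun a : Fin (r - 1) => s(V15.vx i t, V15.bChild i t a) := by
  ext f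
  constructor
  · rintro ⟨hf, hv⟩
    rcases hf with ⟨j', a', rfl⟩ | ⟨j', a', t', ht, rfl⟩ | ⟨i', a', rfl⟩ | ⟨i', a', rfl⟩ |
      ⟨i', t', hT', rfl⟩ | ⟨i', t', hT', rfl⟩ | ⟨i', t', a', rfl⟩ | ⟨i', t', a', u, hu, rfl⟩ |
      ⟨i', j', k, hk, hl, rfl⟩ | ⟨i', j', k, hk, hl, rfl⟩ <;> simp at hv
    · obtain ⟨rfl, rfl⟩ := hv
      exact Or.inl (by simp [hT'])
    · obtain ⟨rfl, rfl⟩ := hv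
      exact Or.inl (by simp [hT'])
    · obtain ⟨rfl, rfl⟩ := hv
      exact Or.inr ⟨a', rfl⟩
  · rintro (rfl | ⟨a, rfl⟩)
    · rcases hT : T i with _ | _
      · exact ⟨Or.inr (Or.inr (Or.inr (Or.inr (Or.inr (Or.inl ⟨i, t, hT, by simp [hT]⟩))))),
          by simp [hT]⟩
      · exact ⟨Or.inr (Or.inr (Or.inr (Or.inr (Or.inl ⟨i, t, hT, by simp [hT]⟩)))),
          by simp [hT]⟩
    · exact ⟨Or.inr (Or.inr (Or.inr (Or.inr (Or.inr (Or.inr (Or.inl ⟨i, t, a, rfl⟩)))))),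
        by simp⟩

lemma star_bChild (i : Fin n) (t : Fin r) (a : Fin (r - 1)) :
    star (SF lit fC fB T K) (V15.bChild i t a) =
      {s(V15.vx i t, V15.bChild i t a)} ∪
      ((fun u => s(V15.bChild i t a, V15.bLeaf i t a u)) '' {u : Fin r | u ≠ fB i t a}) := by
  ext f
  constructor
  · rintro ⟨hf, hv⟩
    rcases hf with ⟨j', a', rfl⟩ | ⟨j', a', t', ht, rfl⟩ | ⟨i', a', rfl⟩ | ⟨i', a', rfl⟩ |
      ⟨i', t', hT', rfl⟩ | ⟨i', t', hT', rfl⟩ | ⟨i', t', a', rfl⟩ | ⟨i', t', a', u, hu, rfl⟩ |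
      ⟨i', j', k, hk, hl, rfl⟩ | ⟨i', j', k, hk, hl, rfl⟩ <;> simp at hv
    · obtain ⟨rfl, rfl, rfl⟩ := hv
      exact Or.inl rfl
    · obtain ⟨rfl, rfl, rfl⟩ := hv
      exact Or.inr ⟨u, hu, rfl⟩
  · rintro (rfl | ⟨u, hu, rfl⟩)
    · exact ⟨Or.inr (Or.inr (Or.inr (Or.inr (Or.inr (Or.inr (Or.inl ⟨i, t, a, rfl⟩)))))),
        by simp⟩
    · exact ⟨Or.inr (Or.inr (Or.inr (Or.inr (Or.inr (Or.inr (Or.inr (Or.inl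
        ⟨i, t, a, u, hu, rfl⟩))))))), by simp⟩

lemma star_bLeaf (i : Fin n) (t : Fin r) (a : Fin (r - 1)) (u : Fin r) :
    star (SF lit fC fB T K) (V15.bLeaf i t a u) ⊆ {s(V15.bChild i t a, V15.bLeaf i t a u)} := by
  rintro f ⟨hf, hv⟩
  rcases hf with ⟨j', a', rfl⟩ | ⟨j', a', t', ht, rfl⟩ | ⟨i', a', rfl⟩ | ⟨i', a', rfl⟩ |
    ⟨i', t', hT', rfl⟩ | ⟨i', t', hT', rfl⟩ | ⟨i', t', a', rfl⟩ | ⟨i', t', a', u', hu, rfl⟩ |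
    ⟨i', j', k, hk, hl, rfl⟩ | ⟨i', j', k, hk, hl, rfl⟩ <;> simp at hv
  obtain ⟨rfl, rfl, rfl, rfl⟩ := hv
  rfl

lemma star_xPend (i : Fin n) (a : Fin (r - 2)) :
    star (SF lit fC fB T K) (V15.xPend i a) ⊆ {s(V15.x i, V15.xPend i a)} := by
  rintro f ⟨hf, hv⟩
  rcases hf with ⟨j', a', rfl⟩ | ⟨j', a', t', ht, rfl⟩ | ⟨i', a', rfl⟩ | ⟨i', a', rfl⟩ |
    ⟨i', t', hT', rfl⟩ | ⟨i', t', hT', rfl⟩ | ⟨i', t', a', rfl⟩ | ⟨i', t', a', u', hu, rfl⟩ |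
    ⟨i', j', k, hk, hl, rfl⟩ | ⟨i', j', k, hk, hl, rfl⟩ <;> simp at hv
  obtain ⟨rfl, rfl⟩ := hv
  rfl

lemma star_nxPend (i : Fin n) (a : Fin (r - 2)) :
    star (SF lit fC fB T K) (V15.nxPend i a) ⊆ {s(V15.nx i, V15.nxPend i a)} := by
  rintro f ⟨hf, hv⟩
  rcases hf with ⟨j', a', rfl⟩ | ⟨j', a', t', ht, rfl⟩ | ⟨i', a', rfl⟩ | ⟨i', a', rfl⟩ |
    ⟨i', t', hT', rfl⟩ | ⟨i', t', hT', rfl⟩ | ⟨i', t', a', rfl⟩ | ⟨i', t', a', u', hu, rfl⟩ |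
    ⟨i', j', k, hk, hl, rfl⟩ | ⟨i', j', k, hk, hl, rfl⟩ <;> simp at hv
  obtain ⟨rfl, rfl⟩ := hv
  rfl


lemma ncard_occ (i : Fin n) (b : Bool)
    (hocc : (Finset.univ.filter fun p : Fin m × Fin 3 => lit p.1 p.2 = (i, b)).card = 2) :
    {p : Fin m × Fin 3 | lit p.1 p.2 = (i, b)}.ncard = 2 := by
  classical
  have h : {p : Fin m × Fin 3 | lit p.1 p.2 = (i, b)} =
      ↑(Finset.univ.filter fun p : Fin m × Fin 3 => lit p.1 p.2 = (i, b)) := by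
    ext p; simp
  rw [h, Set.ncard_coe_finset, hocc]

lemma ncard_star_cl (hr : 2 ≤ r)
    (hdist : ∀ j : Fin m, Function.Injective fun k : Fin 3 => (lit j k).1) (j : Fin m) :
    (star (SF lit fC fB T K) (V15.cl j)).ncard = r := by
  rw [star_cl]
  have hdisj : Disjoint (Set.range fun a : Fin (r - 2) => s(V15.cl j, V15.clChild j a))
      ((fun k => s(litV lit j k, V15.cl j)) '' {k : Fin 3 | k ≠ K j}) := by
    rw [Set.disjoint_left]
    rintro e ⟨a, rfl⟩ ⟨k, -, he⟩
    rcases h2 : (lit j k).2 with _ | _ <;> simp [litV, h2, Sym2.eq_iff] at he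
  rw [Set.ncard_union_eq hdisj (Set.finite_range _) ((Set.toFinite _).image _)]
  have h1 : (Set.range fun a : Fin (r - 2) => s(V15.cl (n := n) j, V15.clChild j a)).ncard
      = r - 2 :=
    ncard_range_fin (by intro a b h; simpa [Sym2.eq_iff] using h)
  have h2 : ((fun k => s(litV (r := r) lit j k, V15.cl j)) '' {k : Fin 3 | k ≠ K j}).ncard
      = 2 := by
    rw [Set.ncard_image_of_injOn, ncard_ne]
    intro k _ k' _ h
    simp only [Sym2.eq_iff] at h
    rcases h with ⟨h1, -⟩ | ⟨h1, h2⟩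
    · exact litV_inj lit hdist h1
    · exact absurd h1 (litV_ne_cl lit j j k)
  omega

lemma ncard_star_clChild (hr : 2 ≤ r) (j : Fin m) (a : Fin (r - 2)) :
    (star (SF lit fC fB T K) (V15.clChild j a)).ncard = r := by
  rw [star_clChild]
  have hdisj : Disjoint {s(V15.cl (n := n) j, V15.clChild j a)}
      ((fun t => s(V15.clChild j a, V15.clLeaf j a t)) '' {t : Fin r | t ≠ fC j a}) := by
    rw [Set.disjoint_left]
    rintro e rfl ⟨t, -, he⟩
    simp [Sym2.eq_iff] at he
  rw [Set.ncard_union_eq hdisj (Set.finite_singleton _) ((Set.toFinite _).image _),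
    Set.ncard_singleton, Set.ncard_image_of_injOn
      (by intro t _ t' _ h; simpa [Sym2.eq_iff] using h), ncard_ne]
  omega

lemma ncard_star_bChild (hr : 2 ≤ r) (i : Fin n) (t : Fin r) (a : Fin (r - 1)) :
    (star (SF lit fC fB T K) (V15.bChild i t a)).ncard = r := by
  rw [star_bChild]
  have hdisj : Disjoint {s(V15.vx (m := m) i t, V15.bChild i t a)}
      ((fun u => s(V15.bChild i t a, V15.bLeaf i t a u)) '' {u : Fin r | u ≠ fB i t a}) := by
    rw [Set.disjoint_left]
    rintro e rfl ⟨u, -, he⟩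
    simp [Sym2.eq_iff] at he
  rw [Set.ncard_union_eq hdisj (Set.finite_singleton _) ((Set.toFinite _).image _),
    Set.ncard_singleton, Set.ncard_image_of_injOn
      (by intro u _ u' _ h; simpa [Sym2.eq_iff] using h), ncard_ne]
  omega

lemma ncard_star_vx (hr : 2 ≤ r) (i : Fin n) (t : Fin r) :
    (star (SF lit fC fB T K) (V15.vx i t)).ncard = r := by
  rw [star_vx]
  have hdisj : Disjoint
      ({if T i then s(V15.x' i, V15.vx i t) else s(V15.nx' i, V15.vx i t)} :
        Set (Sym2 (V15 n m r)))
      (Set.range fun a : Fin (r - 1) => s(V15.vx i t, V15.bChild i t a)) := by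
    rw [Set.disjoint_left]
    rintro e rfl ⟨a, he⟩
    rcases hT : T i with _ | _ <;> simp [hT, Sym2.eq_iff] at he
  rw [Set.ncard_union_eq hdisj (Set.finite_singleton _) (Set.finite_range _),
    Set.ncard_singleton, ncard_range_fin (by intro a b h; simpa [Sym2.eq_iff] using h)]
  omega

lemma ncard_star_x'_true (i : Fin n) (hT : T i = true) :
    (star (SF lit fC fB T K) (V15.x' i)).ncard = r := by
  rw [star_x'_true lit fC fB T K i hT]
  exact ncard_range_fin (by intro a b h; simpa [Sym2.eq_iff] using h)

lemma ncard_star_nx'_false (i : Fin n) (hT : T i = false) :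
    (star (SF lit fC fB T K) (V15.nx' i)).ncard = r := by
  rw [star_nx'_false lit fC fB T K i hT]
  exact ncard_range_fin (by intro a b h; simpa [Sym2.eq_iff] using h)

lemma ncard_star_x_le (hr : 2 ≤ r) (i : Fin n)
    (hpos : (Finset.univ.filter fun p : Fin m × Fin 3 => lit p.1 p.2 = (i, true)).card = 2) :
    (star (SF lit fC fB T K) (V15.x i)).ncard ≤ r := by
  rw [star_x]
  have h1 := Set.ncard_union_le
    (Set.range fun a : Fin (r - 2) => s(V15.x i, V15.xPend i a))
    ((fun p : Fin m × Fin 3 => s(V15.x (r := r) i, V15.cl p.1)) ''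
      {p : Fin m × Fin 3 | p.2 ≠ K p.1 ∧ lit p.1 p.2 = (i, true)})
  have h2 : (Set.range fun a : Fin (r - 2) => s(V15.x (m := m) i, V15.xPend i a)).ncard = r - 2 :=
    ncard_range_fin (by intro a b h; simpa [Sym2.eq_iff] using h)
  have h3 : ((fun p : Fin m × Fin 3 => s(V15.x (r := r) i, V15.cl p.1)) ''
      {p : Fin m × Fin 3 | p.2 ≠ K p.1 ∧ lit p.1 p.2 = (i, true)}).ncard ≤ 2 := by
    calc ((fun p : Fin m × Fin 3 => s(V15.x (r := r) i, V15.cl p.1)) ''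
        {p : Fin m × Fin 3 | p.2 ≠ K p.1 ∧ lit p.1 p.2 = (i, true)}).ncard
        ≤ {p : Fin m × Fin 3 | p.2 ≠ K p.1 ∧ lit p.1 p.2 = (i, true)}.ncard :=
          Set.ncard_image_le (Set.toFinite _)
      _ ≤ {p : Fin m × Fin 3 | lit p.1 p.2 = (i, true)}.ncard :=
          Set.ncard_le_ncard (fun p hp => hp.2) (Set.toFinite _)
      _ = 2 := ncard_occ lit i true hpos
  omega

lemma ncard_star_nx_le (hr : 2 ≤ r) (i : Fin n)
    (hneg : (Finset.univ.filter fun p : Fin m × Fin 3 => lit p.1 p.2 = (i, false)).card = 2) :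
    (star (SF lit fC fB T K) (V15.nx i)).ncard ≤ r := by
  rw [star_nx]
  have h1 := Set.ncard_union_le
    (Set.range fun a : Fin (r - 2) => s(V15.nx i, V15.nxPend i a))
    ((fun p : Fin m × Fin 3 => s(V15.nx (r := r) i, V15.cl p.1)) ''
      {p : Fin m × Fin 3 | p.2 ≠ K p.1 ∧ lit p.1 p.2 = (i, false)})
  have h2 : (Set.range fun a : Fin (r - 2) => s(V15.nx (m := m) i, V15.nxPend i a)).ncard = r - 2 :=
    ncard_range_fin (by intro a b h; simpa [Sym2.eq_iff] using h)
  have h3 : ((fun p : Fin m × Fin 3 => s(V15.nx (r := r) i, V15.cl p.1)) ''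
      {p : Fin m × Fin 3 | p.2 ≠ K p.1 ∧ lit p.1 p.2 = (i, false)}).ncard ≤ 2 := by
    calc ((fun p : Fin m × Fin 3 => s(V15.nx (r := r) i, V15.cl p.1)) ''
        {p : Fin m × Fin 3 | p.2 ≠ K p.1 ∧ lit p.1 p.2 = (i, false)}).ncard
        ≤ {p : Fin m × Fin 3 | p.2 ≠ K p.1 ∧ lit p.1 p.2 = (i, false)}.ncard :=
          Set.ncard_image_le (Set.toFinite _)
      _ ≤ {p : Fin m × Fin 3 | lit p.1 p.2 = (i, false)}.ncard :=
          Set.ncard_le_ncard (fun p hp => hp.2) (Set.toFinite _)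
      _ = 2 := ncard_occ lit i false hneg
  omega

lemma ncard_star_x_false (hr : 2 ≤ r)
    (hdist : ∀ j : Fin m, Function.Injective fun k : Fin 3 => (lit j k).1)
    (hK : ∀ j : Fin m, T (lit j (K j)).1 = (lit j (K j)).2) (i : Fin n)
    (hpos : (Finset.univ.filter fun p : Fin m × Fin 3 => lit p.1 p.2 = (i, true)).card = 2)
    (hT : T i = false) :
    (star (SF lit fC fB T K) (V15.x i)).ncard = r := by
  rw [star_x]
  have hset : {p : Fin m × Fin 3 | p.2 ≠ K p.1 ∧ lit p.1 p.2 = (i, true)} =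
      {p : Fin m × Fin 3 | lit p.1 p.2 = (i, true)} := by
    ext p
    simp only [Set.mem_setOf_eq, and_iff_right_iff_imp]
    intro hp hpk
    have := hK p.1
    rw [← hpk, hp] at this
    simp [hT] at this
  rw [hset]
  have hdisj : Disjoint (Set.range fun a : Fin (r - 2) => s(V15.x (m := m) i, V15.xPend i a))
      ((fun p : Fin m × Fin 3 => s(V15.x (r := r) i, V15.cl p.1)) ''
        {p : Fin m × Fin 3 | lit p.1 p.2 = (i, true)}) := by
    rw [Set.disjoint_left]
    rintro e ⟨a, rfl⟩ ⟨p, -, he⟩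
    simp [Sym2.eq_iff] at he
  rw [Set.ncard_union_eq hdisj (Set.finite_range _) ((Set.toFinite _).image _),
    ncard_range_fin (by intro a b h; simpa [Sym2.eq_iff] using h),
    Set.ncard_image_of_injOn, ncard_occ lit i true hpos]
  · omega
  · intro p hp q hq h
    simp only [Sym2.eq_iff] at h
    rcases h with ⟨-, h1⟩ | ⟨h1, -⟩
    · have h2 : p.1 = q.1 := by simpa using h1
      have h3 : (lit p.1 p.2).1 = (lit q.1 q.2).1 := by
        rw [Set.mem_setOf_eq] at hp hq
        rw [hp, hq]
      rw [h2] at h3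
      have := hdist q.1 h3
      exact Prod.ext h2 this
    · simp at h1

lemma ncard_star_nx_true (hr : 2 ≤ r)
    (hdist : ∀ j : Fin m, Function.Injective fun k : Fin 3 => (lit j k).1)
    (hK : ∀ j : Fin m, T (lit j (K j)).1 = (lit j (K j)).2) (i : Fin n)
    (hneg : (Finset.univ.filter fun p : Fin m × Fin 3 => lit p.1 p.2 = (i, false)).card = 2)
    (hT : T i = true) :
    (star (SF lit fC fB T K) (V15.nx i)).ncard = r := by
  rw [star_nx]
  have hset : {p : Fin m × Fin 3 | p.2 ≠ K p.1 ∧ lit p.1 p.2 = (i, false)} =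
      {p : Fin m × Fin 3 | lit p.1 p.2 = (i, false)} := by
    ext p
    simp only [Set.mem_setOf_eq, and_iff_right_iff_imp]
    intro hp hpk
    have := hK p.1
    rw [← hpk, hp] at this
    simp [hT] at this
  rw [hset]
  have hdisj : Disjoint (Set.range fun a : Fin (r - 2) => s(V15.nx (m := m) i, V15.nxPend i a))
      ((fun p : Fin m × Fin 3 => s(V15.nx (r := r) i, V15.cl p.1)) ''
        {p : Fin m × Fin 3 | lit p.1 p.2 = (i, false)}) := by
    rw [Set.disjoint_left]
    rintro e ⟨a, rfl⟩ ⟨p, -, he⟩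
    simp [Sym2.eq_iff] at he
  rw [Set.ncard_union_eq hdisj (Set.finite_range _) ((Set.toFinite _).image _),
    ncard_range_fin (by intro a b h; simpa [Sym2.eq_iff] using h),
    Set.ncard_image_of_injOn, ncard_occ lit i false hneg]
  · omega
  · intro p hp q hq h
    simp only [Sym2.eq_iff] at h
    rcases h with ⟨-, h1⟩ | ⟨h1, -⟩
    · have h2 : p.1 = q.1 := by simpa using h1
      have h3 : (lit p.1 p.2).1 = (lit q.1 q.2).1 := by
        rw [Set.mem_setOf_eq] at hp hq
        rw [hp, hq]
      rw [h2] at h3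
      have := hdist q.1 h3
      exact Prod.ext h2 this
    · simp at h1


lemma SF_subset : SF lit fC fB T K ⊆ E15 n m r lit \ Forb15 n m r fC fB := by
  rintro e hf
  refine ⟨?_, ?_⟩
  · rcases hf with ⟨j, a, rfl⟩ | ⟨j, a, t, ht, rfl⟩ | ⟨i, a, rfl⟩ | ⟨i, a, rfl⟩ |
      ⟨i, t, hT, rfl⟩ | ⟨i, t, hT, rfl⟩ | ⟨i, t, a, rfl⟩ | ⟨i, t, a, u, hu, rfl⟩ |
      ⟨i, j, k, hk, hl, rfl⟩ | ⟨i, j, k, hk, hl, rfl⟩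
    · exact Or.inl ⟨j, a, rfl⟩
    · exact Or.inr (Or.inl ⟨j, a, t, rfl⟩)
    · exact Or.inr (Or.inr (Or.inl ⟨i, a, Or.inl rfl⟩))
    · exact Or.inr (Or.inr (Or.inl ⟨i, a, Or.inr rfl⟩))
    · exact Or.inr (Or.inr (Or.inr (Or.inl ⟨i, t, Or.inl rfl⟩)))
    · exact Or.inr (Or.inr (Or.inr (Or.inl ⟨i, t, Or.inr rfl⟩)))
    · exact Or.inr (Or.inr (Or.inr (Or.inr (Or.inr (Or.inl ⟨i, t, a, rfl⟩)))))
    · exact Or.inr (Or.inr (Or.inr (Or.inr (Or.inr (Or.inr (Or.inl ⟨i, t, a, u, rfl⟩))))))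
    · exact Or.inr (Or.inr (Or.inr (Or.inr (Or.inr (Or.inr (Or.inr (Or.inl
        ⟨i, j, k, hl, rfl⟩)))))))
    · exact Or.inr (Or.inr (Or.inr (Or.inr (Or.inr (Or.inr (Or.inr (Or.inr
        ⟨i, j, k, hl, rfl⟩)))))))
  · intro hFb
    rcases hf with ⟨j, a, rfl⟩ | ⟨j, a, t, ht, rfl⟩ | ⟨i, a, rfl⟩ | ⟨i, a, rfl⟩ |
      ⟨i, t, hT, rfl⟩ | ⟨i, t, hT, rfl⟩ | ⟨i, t, a, rfl⟩ | ⟨i, t, a, u, hu, rfl⟩ |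
      ⟨i, j, k, hk, hl, rfl⟩ | ⟨i, j, k, hk, hl, rfl⟩ <;>
    rcases hFb with ⟨j2, a2, h⟩ | ⟨i2, h | h⟩ | ⟨i2, t2, a2, h⟩ <;>
      simp [Sym2.eq_iff] at h <;> simp_all

lemma SF_star_finite (v : V15 n m r) : (star (SF lit fC fB T K) v).Finite := by
  cases v with
  | cl j => rw [star_cl]; exact (Set.finite_range _).union ((Set.toFinite _).image _)
  | clChild j a => rw [star_clChild]
                   exact (Set.finite_singleton _).union ((Set.toFinite _).image _)
  | clLeaf j a t => exact Set.Finite.subset (Set.finite_singleton _) (star_clLeaf _ _ _ _ _ _ _ _)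
  | x i => rw [star_x]; exact (Set.finite_range _).union ((Set.toFinite _).image _)
  | nx i => rw [star_nx]; exact (Set.finite_range _).union ((Set.toFinite _).image _)
  | x' i => exact Set.Finite.subset (Set.finite_range _) (star_x'_sub _ _ _ _ _ _)
  | nx' i => exact Set.Finite.subset (Set.finite_range _) (star_nx'_sub _ _ _ _ _ _)
  | xPend i a => exact Set.Finite.subset (Set.finite_singleton _) (star_xPend _ _ _ _ _ _ _)
  | nxPend i a => exact Set.Finite.subset (Set.finite_singleton _) (star_nxPend _ _ _ _ _ _ _)
  | vx i t => rw [star_vx]; exact (Set.finite_singleton _).union (Set.finite_range _)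
  | bChild i t a => rw [star_bChild]
                    exact (Set.finite_singleton _).union ((Set.toFinite _).image _)
  | bLeaf i t a u =>
      exact Set.Finite.subset (Set.finite_singleton _) (star_bLeaf _ _ _ _ _ _ _ _ _)

lemma SF_deg_le (hr : 2 ≤ r)
    (hdist : ∀ j : Fin m, Function.Injective fun k : Fin 3 => (lit j k).1)
    (hpos : ∀ v : Fin n,
      (Finset.univ.filter fun p : Fin m × Fin 3 => lit p.1 p.2 = (v, true)).card = 2)
    (hneg : ∀ v : Fin n,
      (Finset.univ.filter fun p : Fin m × Fin 3 => lit p.1 p.2 = (v, false)).card = 2)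
    (v : V15 n m r) : (star (SF lit fC fB T K) v).ncard ≤ r := by
  cases v with
  | cl j => exact le_of_eq (ncard_star_cl lit fC fB T K hr hdist j)
  | clChild j a => exact le_of_eq (ncard_star_clChild lit fC fB T K hr j a)
  | clLeaf j a t =>
      have := Set.ncard_le_ncard (star_clLeaf lit fC fB T K j a t) (Set.finite_singleton _)
      simp only [Set.ncard_singleton] at this
      omega
  | x i => exact ncard_star_x_le lit fC fB T K hr i (hpos i)
  | nx i => exact ncard_star_nx_le lit fC fB T K hr i (hneg i)
  | x' i =>
      have := Set.ncard_le_ncard (star_x'_sub lit fC fB T K i) (Set.finite_range _)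
      rwa [ncard_range_fin (by intro a b h; simpa [Sym2.eq_iff] using h)] at this
  | nx' i =>
      have := Set.ncard_le_ncard (star_nx'_sub lit fC fB T K i) (Set.finite_range _)
      rwa [ncard_range_fin (by intro a b h; simpa [Sym2.eq_iff] using h)] at this
  | xPend i a =>
      have := Set.ncard_le_ncard (star_xPend lit fC fB T K i a) (Set.finite_singleton _)
      simp only [Set.ncard_singleton] at this
      omega
  | nxPend i a =>
      have := Set.ncard_le_ncard (star_nxPend lit fC fB T K i a) (Set.finite_singleton _)
      simp only [Set.ncard_singleton] at this
      omega
  | vx i t => exact le_of_eq (ncard_star_vx lit fC fB T K hr i t)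
  | bChild i t a => exact le_of_eq (ncard_star_bChild lit fC fB T K hr i t a)
  | bLeaf i t a u =>
      have := Set.ncard_le_ncard (star_bLeaf lit fC fB T K i t a u) (Set.finite_singleton _)
      simp only [Set.ncard_singleton] at this
      omega

lemma SF_max (hr : 2 ≤ r)
    (hdist : ∀ j : Fin m, Function.Injective fun k : Fin 3 => (lit j k).1)
    (hpos : ∀ v : Fin n,
      (Finset.univ.filter fun p : Fin m × Fin 3 => lit p.1 p.2 = (v, true)).card = 2)
    (hneg : ∀ v : Fin n,
      (Finset.univ.filter fun p : Fin m × Fin 3 => lit p.1 p.2 = (v, false)).card = 2)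
    (hK : ∀ j : Fin m, T (lit j (K j)).1 = (lit j (K j)).2)
    {e : Sym2 (V15 n m r)} (he : e ∈ E15 n m r lit) (heS : e ∉ SF lit fC fB T K) :
    ¬ ∀ w : V15 n m r, ({f ∈ insert e (SF lit fC fB T K) | w ∈ f}).ncard ≤ r := by
  have key : ∀ v : V15 n m r, v ∈ e → (star (SF lit fC fB T K) v).ncard = r →
      ¬ ∀ w : V15 n m r, ({f ∈ insert e (SF lit fC fB T K) | w ∈ f}).ncard ≤ r :=
    fun v hv hcard =>
      not_le_of_full hv heS (SF_star_finite lit fC fB T K v) (le_of_eq hcard.symm)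
  rcases he with ⟨j, a, rfl⟩ | ⟨j, a, t, rfl⟩ | ⟨i, a, h | h⟩ | ⟨i, t, h | h⟩ |
    ⟨i, h | h⟩ | ⟨i, t, a, rfl⟩ | ⟨i, t, a, u, rfl⟩ | ⟨i, j, k, hl, rfl⟩ | ⟨i, j, k, hl, rfl⟩
  · exact absurd (Or.inl ⟨j, a, rfl⟩) heS
  · by_cases ht : t = fC j a
    · exact key (V15.clChild j a) (by simp) (ncard_star_clChild lit fC fB T K hr j a)
    · exact absurd (Or.inr (Or.inl ⟨j, a, t, ht, rfl⟩)) heS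
  · exact absurd (Or.inr (Or.inr (Or.inl ⟨i, a, h⟩))) heS
  · exact absurd (Or.inr (Or.inr (Or.inr (Or.inl ⟨i, a, h⟩)))) heS
  · exact key (V15.vx i t) (by rw [h]; simp) (ncard_star_vx lit fC fB T K hr i t)
  · exact key (V15.vx i t) (by rw [h]; simp) (ncard_star_vx lit fC fB T K hr i t)
  · rcases hT : T i with _ | _
    · exact key (V15.x i) (by rw [h]; simp)
        (ncard_star_x_false lit fC fB T K hr hdist hK i (hpos i) hT)
    · exact key (V15.x' i) (by rw [h]; simp) (ncard_star_x'_true lit fC fB T K i hT)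
  · rcases hT : T i with _ | _
    · exact key (V15.nx' i) (by rw [h]; simp) (ncard_star_nx'_false lit fC fB T K i hT)
    · exact key (V15.nx i) (by rw [h]; simp)
        (ncard_star_nx_true lit fC fB T K hr hdist hK i (hneg i) hT)
  · exact absurd (Or.inr (Or.inr (Or.inr (Or.inr (Or.inr (Or.inr (Or.inl
      ⟨i, t, a, rfl⟩))))))) heS
  · by_cases hu : u = fB i t a
    · exact key (V15.bChild i t a) (by simp) (ncard_star_bChild lit fC fB T K hr i t a)
    · exact absurd (Or.inr (Or.inr (Or.inr (Or.inr (Or.inr (Or.inr (Or.inr (Or.inl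
        ⟨i, t, a, u, hu, rfl⟩)))))))) heS
  · exact key (V15.cl j) (by simp) (ncard_star_cl lit fC fB T K hr hdist j)
  · exact key (V15.cl j) (by simp) (ncard_star_cl lit fC fB T K hr hdist j)


end Fwd

section Bwd
variable (lit : Fin m → Fin 3 → Fin n × Bool) (fC : Fin m → Fin (r - 2) → Fin r)
  (fB : Fin n → Fin r → Fin (r - 1) → Fin r) {S : Set (Sym2 (V15 n m r))}

lemma bstar_clLeaf_fC (hS : S ⊆ E15 n m r lit \ Forb15 n m r fC fB) (j : Fin m)
    (a : Fin (r - 2)) : star S (V15.clLeaf j a (fC j a)) = ∅ := by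
  rw [Set.eq_empty_iff_forall_notMem]
  rintro f ⟨hfS, hv⟩
  obtain ⟨hfE, hfF⟩ := hS hfS
  rcases hfE with ⟨j', a', rfl⟩ | ⟨j', a', t, rfl⟩ | ⟨i, a', rfl | rfl⟩ | ⟨i, t, rfl | rfl⟩ |
    ⟨i, rfl | rfl⟩ | ⟨i, t, a', rfl⟩ | ⟨i, t, a', u, rfl⟩ | ⟨i, j', k, hl, rfl⟩ |
    ⟨i, j', k, hl, rfl⟩ <;> simp at hv
  obtain ⟨rfl, rfl, rfl⟩ := hv
  exact hfF (Or.inl ⟨j, a, rfl⟩)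

lemma bstar_bLeaf_fB (hS : S ⊆ E15 n m r lit \ Forb15 n m r fC fB) (i : Fin n) (t : Fin r)
    (a : Fin (r - 1)) : star S (V15.bLeaf i t a (fB i t a)) = ∅ := by
  rw [Set.eq_empty_iff_forall_notMem]
  rintro f ⟨hfS, hv⟩
  obtain ⟨hfE, hfF⟩ := hS hfS
  rcases hfE with ⟨j', a', rfl⟩ | ⟨j', a', t', rfl⟩ | ⟨i', a', rfl | rfl⟩ |
    ⟨i', t', rfl | rfl⟩ | ⟨i', rfl | rfl⟩ | ⟨i', t', a', rfl⟩ | ⟨i', t', a', u, rfl⟩ |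
    ⟨i', j', k, hl, rfl⟩ | ⟨i', j', k, hl, rfl⟩ <;> simp at hv
  obtain ⟨rfl, rfl, rfl, rfl⟩ := hv
  exact hfF (Or.inr (Or.inr ⟨i, t, a, rfl⟩))

lemma bstar_clChild_sub (hS : S ⊆ E15 n m r lit \ Forb15 n m r fC fB) (j : Fin m)
    (a : Fin (r - 2)) :
    star S (V15.clChild j a) ⊆ {s(V15.cl j, V15.clChild j a)} ∪
      ((fun t => s(V15.clChild j a, V15.clLeaf j a t)) '' {t : Fin r | t ≠ fC j a}) := by
  rintro f ⟨hfS, hv⟩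
  obtain ⟨hfE, hfF⟩ := hS hfS
  rcases hfE with ⟨j', a', rfl⟩ | ⟨j', a', t, rfl⟩ | ⟨i, a', rfl | rfl⟩ | ⟨i, t, rfl | rfl⟩ |
    ⟨i, rfl | rfl⟩ | ⟨i, t, a', rfl⟩ | ⟨i, t, a', u, rfl⟩ | ⟨i, j', k, hl, rfl⟩ |
    ⟨i, j', k, hl, rfl⟩ <;> simp at hv
  · obtain ⟨rfl, rfl⟩ := hv
    exact Or.inl rfl
  · obtain ⟨rfl, rfl⟩ := hv
    refine Or.inr ⟨t, ?_, rfl⟩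
    intro ht
    exact hfF (Or.inl ⟨j, a, by rw [ht]⟩)

lemma bstar_bChild_sub (hS : S ⊆ E15 n m r lit \ Forb15 n m r fC fB) (i : Fin n) (t : Fin r)
    (a : Fin (r - 1)) :
    star S (V15.bChild i t a) ⊆ {s(V15.vx i t, V15.bChild i t a)} ∪
      ((fun u => s(V15.bChild i t a, V15.bLeaf i t a u)) '' {u : Fin r | u ≠ fB i t a}) := by
  rintro f ⟨hfS, hv⟩
  obtain ⟨hfE, hfF⟩ := hS hfS
  rcases hfE with ⟨j', a', rfl⟩ | ⟨j', a', t', rfl⟩ | ⟨i', a', rfl | rfl⟩ |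
    ⟨i', t', rfl | rfl⟩ | ⟨i', rfl | rfl⟩ | ⟨i', t', a', rfl⟩ | ⟨i', t', a', u, rfl⟩ |
    ⟨i', j', k, hl, rfl⟩ | ⟨i', j', k, hl, rfl⟩ <;> simp at hv
  · obtain ⟨rfl, rfl, rfl⟩ := hv
    exact Or.inl rfl
  · obtain ⟨rfl, rfl, rfl⟩ := hv
    refine Or.inr ⟨u, ?_, rfl⟩
    intro hu
    exact hfF (Or.inr (Or.inr ⟨i, t, a, by rw [hu]⟩))

lemma bstar_x'_sub (hS : S ⊆ E15 n m r lit \ Forb15 n m r fC fB) (i : Fin n) :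
    star S (V15.x' i) ⊆ Set.range fun t : Fin r => s(V15.x' i, V15.vx i t) := by
  rintro f ⟨hfS, hv⟩
  obtain ⟨hfE, hfF⟩ := hS hfS
  rcases hfE with ⟨j', a', rfl⟩ | ⟨j', a', t', rfl⟩ | ⟨i', a', rfl | rfl⟩ |
    ⟨i', t', rfl | rfl⟩ | ⟨i', rfl | rfl⟩ | ⟨i', t', a', rfl⟩ | ⟨i', t', a', u, rfl⟩ |
    ⟨i', j', k, hl, rfl⟩ | ⟨i', j', k, hl, rfl⟩ <;> simp at hv
  · subst hv
    exact ⟨t', rfl⟩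
  · subst hv
    exact absurd (Or.inr (Or.inl ⟨i, Or.inl rfl⟩)) hfF

lemma bstar_nx'_sub (hS : S ⊆ E15 n m r lit \ Forb15 n m r fC fB) (i : Fin n) :
    star S (V15.nx' i) ⊆ Set.range fun t : Fin r => s(V15.nx' i, V15.vx i t) := by
  rintro f ⟨hfS, hv⟩
  obtain ⟨hfE, hfF⟩ := hS hfS
  rcases hfE with ⟨j', a', rfl⟩ | ⟨j', a', t', rfl⟩ | ⟨i', a', rfl | rfl⟩ |
    ⟨i', t', rfl | rfl⟩ | ⟨i', rfl | rfl⟩ | ⟨i', t', a', rfl⟩ | ⟨i', t', a', u, rfl⟩ |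
    ⟨i', j', k, hl, rfl⟩ | ⟨i', j', k, hl, rfl⟩ <;> simp at hv
  · subst hv
    exact ⟨t', rfl⟩
  · subst hv
    exact absurd (Or.inr (Or.inl ⟨i, Or.inr rfl⟩)) hfF

lemma bstar_x_sub (hS : S ⊆ E15 n m r lit \ Forb15 n m r fC fB) (i : Fin n) :
    star S (V15.x i) ⊆ (Set.range fun a : Fin (r - 2) => s(V15.x i, V15.xPend i a)) ∪
      ((fun p : Fin m × Fin 3 => s(V15.x (r := r) i, V15.cl p.1)) ''
        {p : Fin m × Fin 3 | lit p.1 p.2 = (i, true)}) := by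
  rintro f ⟨hfS, hv⟩
  obtain ⟨hfE, hfF⟩ := hS hfS
  rcases hfE with ⟨j', a', rfl⟩ | ⟨j', a', t', rfl⟩ | ⟨i', a', rfl | rfl⟩ |
    ⟨i', t', rfl | rfl⟩ | ⟨i', rfl | rfl⟩ | ⟨i', t', a', rfl⟩ | ⟨i', t', a', u, rfl⟩ |
    ⟨i', j', k, hl, rfl⟩ | ⟨i', j', k, hl, rfl⟩ <;> simp at hv
  · subst hv
    exact Or.inl ⟨a', rfl⟩
  · subst hv
    exact absurd (Or.inr (Or.inl ⟨i, Or.inl rfl⟩)) hfF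
  · subst hv
    exact Or.inr ⟨(j', k), hl, rfl⟩

lemma bstar_nx_sub (hS : S ⊆ E15 n m r lit \ Forb15 n m r fC fB) (i : Fin n) :
    star S (V15.nx i) ⊆ (Set.range fun a : Fin (r - 2) => s(V15.nx i, V15.nxPend i a)) ∪
      ((fun p : Fin m × Fin 3 => s(V15.nx (r := r) i, V15.cl p.1)) ''
        {p : Fin m × Fin 3 | lit p.1 p.2 = (i, false)}) := by
  rintro f ⟨hfS, hv⟩
  obtain ⟨hfE, hfF⟩ := hS hfS
  rcases hfE with ⟨j', a', rfl⟩ | ⟨j', a', t', rfl⟩ | ⟨i', a', rfl | rfl⟩ |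
    ⟨i', t', rfl | rfl⟩ | ⟨i', rfl | rfl⟩ | ⟨i', t', a', rfl⟩ | ⟨i', t', a', u, rfl⟩ |
    ⟨i', j', k, hl, rfl⟩ | ⟨i', j', k, hl, rfl⟩ <;> simp at hv
  · subst hv
    exact Or.inl ⟨a', rfl⟩
  · subst hv
    exact absurd (Or.inr (Or.inl ⟨i, Or.inr rfl⟩)) hfF
  · subst hv
    exact Or.inr ⟨(j', k), hl, rfl⟩

lemma bstar_vx_sub (hS : S ⊆ E15 n m r lit \ Forb15 n m r fC fB) (i : Fin n) (t : Fin r) :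
    star S (V15.vx i t) ⊆ {s(V15.x' i, V15.vx i t), s(V15.nx' i, V15.vx i t)} ∪
      Set.range fun a : Fin (r - 1) => s(V15.vx i t, V15.bChild i t a) := by
  rintro f ⟨hfS, hv⟩
  obtain ⟨hfE, hfF⟩ := hS hfS
  rcases hfE with ⟨j', a', rfl⟩ | ⟨j', a', t', rfl⟩ | ⟨i', a', rfl | rfl⟩ |
    ⟨i', t', rfl | rfl⟩ | ⟨i', rfl | rfl⟩ | ⟨i', t', a', rfl⟩ | ⟨i', t', a', u, rfl⟩ |
    ⟨i', j', k, hl, rfl⟩ | ⟨i', j', k, hl, rfl⟩ <;> simp at hv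
  · obtain ⟨rfl, rfl⟩ := hv
    exact Or.inl (Or.inl rfl)
  · obtain ⟨rfl, rfl⟩ := hv
    exact Or.inl (Or.inr rfl)
  · obtain ⟨rfl, rfl⟩ := hv
    exact Or.inr ⟨a', rfl⟩

lemma bstar_cl_sub (hS : S ⊆ E15 n m r lit \ Forb15 n m r fC fB) (j : Fin m) :
    star S (V15.cl j) ⊆ (Set.range fun a : Fin (r - 2) => s(V15.cl j, V15.clChild j a)) ∪
      ((fun k => s(litV (r := r) lit j k, V15.cl j)) '' Set.univ) := by
  rintro f ⟨hfS, hv⟩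
  obtain ⟨hfE, hfF⟩ := hS hfS
  rcases hfE with ⟨j', a', rfl⟩ | ⟨j', a', t', rfl⟩ | ⟨i', a', rfl | rfl⟩ |
    ⟨i', t', rfl | rfl⟩ | ⟨i', rfl | rfl⟩ | ⟨i', t', a', rfl⟩ | ⟨i', t', a', u, rfl⟩ |
    ⟨i', j', k, hl, rfl⟩ | ⟨i', j', k, hl, rfl⟩ <;> simp at hv
  · subst hv
    exact Or.inl ⟨a', rfl⟩
  · subst hv
    exact Or.inr ⟨k, trivial, by simp [litV, hl]⟩
  · subst hv
    exact Or.inr ⟨k, trivial, by simp [litV, hl]⟩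

lemma ncard_permClChild (hr : 2 ≤ r) (j : Fin m) (a : Fin (r - 2)) :
    (({s(V15.cl (n := n) j, V15.clChild j a)} : Set (Sym2 (V15 n m r))) ∪
      ((fun t => s(V15.clChild j a, V15.clLeaf j a t)) '' {t : Fin r | t ≠ fC j a})).ncard
      = r := by
  have hdisj : Disjoint {s(V15.cl (n := n) j, V15.clChild j a)}
      ((fun t => s(V15.clChild j a, V15.clLeaf j a t)) '' {t : Fin r | t ≠ fC j a}) := by
    rw [Set.disjoint_left]
    rintro e rfl ⟨t, -, he⟩
    simp [Sym2.eq_iff] at he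
  rw [Set.ncard_union_eq hdisj (Set.finite_singleton _) ((Set.toFinite _).image _),
    Set.ncard_singleton, Set.ncard_image_of_injOn
      (by intro t _ t' _ h; simpa [Sym2.eq_iff] using h), ncard_ne]
  omega

lemma ncard_permBChild (hr : 2 ≤ r) (i : Fin n) (t : Fin r) (a : Fin (r - 1)) :
    (({s(V15.vx (m := m) i t, V15.bChild i t a)} : Set (Sym2 (V15 n m r))) ∪
      ((fun u => s(V15.bChild i t a, V15.bLeaf i t a u)) '' {u : Fin r | u ≠ fB i t a})).ncard
      = r := by
  have hdisj : Disjoint {s(V15.vx (m := m) i t, V15.bChild i t a)}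
      ((fun u => s(V15.bChild i t a, V15.bLeaf i t a u)) '' {u : Fin r | u ≠ fB i t a}) := by
    rw [Set.disjoint_left]
    rintro e rfl ⟨u, -, he⟩
    simp [Sym2.eq_iff] at he
  rw [Set.ncard_union_eq hdisj (Set.finite_singleton _) ((Set.toFinite _).image _),
    Set.ncard_singleton, Set.ncard_image_of_injOn
      (by intro u _ u' _ h; simpa [Sym2.eq_iff] using h), ncard_ne]
  omega

lemma ncard_permX (hr : 2 ≤ r)
    (hdist : ∀ j : Fin m, Function.Injective fun k : Fin 3 => (lit j k).1) (i : Fin n)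
    (hpos : (Finset.univ.filter fun p : Fin m × Fin 3 => lit p.1 p.2 = (i, true)).card = 2) :
    ((Set.range fun a : Fin (r - 2) => s(V15.x (m := m) i, V15.xPend i a)) ∪
      ((fun p : Fin m × Fin 3 => s(V15.x (r := r) i, V15.cl p.1)) ''
        {p : Fin m × Fin 3 | lit p.1 p.2 = (i, true)})).ncard = r := by
  have hdisj : Disjoint (Set.range fun a : Fin (r - 2) => s(V15.x (m := m) i, V15.xPend i a))
      ((fun p : Fin m × Fin 3 => s(V15.x (r := r) i, V15.cl p.1)) ''
        {p : Fin m × Fin 3 | lit p.1 p.2 = (i, true)}) := by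
    rw [Set.disjoint_left]
    rintro e ⟨a, rfl⟩ ⟨p, -, he⟩
    simp [Sym2.eq_iff] at he
  rw [Set.ncard_union_eq hdisj (Set.finite_range _) ((Set.toFinite _).image _),
    ncard_range_fin (by intro a b h; simpa [Sym2.eq_iff] using h),
    Set.ncard_image_of_injOn, ncard_occ lit i true hpos]
  · omega
  · intro p hp q hq h
    simp only [Sym2.eq_iff] at h
    rcases h with ⟨-, h1⟩ | ⟨h1, -⟩
    · have h2 : p.1 = q.1 := by simpa using h1
      have h3 : (lit p.1 p.2).1 = (lit q.1 q.2).1 := by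
        rw [Set.mem_setOf_eq] at hp hq
        rw [hp, hq]
      rw [h2] at h3
      exact Prod.ext h2 (hdist q.1 h3)
    · simp at h1

lemma ncard_permNx (hr : 2 ≤ r)
    (hdist : ∀ j : Fin m, Function.Injective fun k : Fin 3 => (lit j k).1) (i : Fin n)
    (hneg : (Finset.univ.filter fun p : Fin m × Fin 3 => lit p.1 p.2 = (i, false)).card = 2) :
    ((Set.range fun a : Fin (r - 2) => s(V15.nx (m := m) i, V15.nxPend i a)) ∪
      ((fun p : Fin m × Fin 3 => s(V15.nx (r := r) i, V15.cl p.1)) ''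
        {p : Fin m × Fin 3 | lit p.1 p.2 = (i, false)})).ncard = r := by
  have hdisj : Disjoint (Set.range fun a : Fin (r - 2) => s(V15.nx (m := m) i, V15.nxPend i a))
      ((fun p : Fin m × Fin 3 => s(V15.nx (r := r) i, V15.cl p.1)) ''
        {p : Fin m × Fin 3 | lit p.1 p.2 = (i, false)}) := by
    rw [Set.disjoint_left]
    rintro e ⟨a, rfl⟩ ⟨p, -, he⟩
    simp [Sym2.eq_iff] at he
  rw [Set.ncard_union_eq hdisj (Set.finite_range _) ((Set.toFinite _).image _),
    ncard_range_fin (by intro a b h; simpa [Sym2.eq_iff] using h),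
    Set.ncard_image_of_injOn, ncard_occ lit i false hneg]
  · omega
  · intro p hp q hq h
    simp only [Sym2.eq_iff] at h
    rcases h with ⟨-, h1⟩ | ⟨h1, -⟩
    · have h2 : p.1 = q.1 := by simpa using h1
      have h3 : (lit p.1 p.2).1 = (lit q.1 q.2).1 := by
        rw [Set.mem_setOf_eq] at hp hq
        rw [hp, hq]
      rw [h2] at h3
      exact Prod.ext h2 (hdist q.1 h3)
    · simp at h1

variable (hS : S ⊆ E15 n m r lit \ Forb15 n m r fC fB)
  (hdeg : ∀ v : V15 n m r, (star S v).ncard ≤ r)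
  (hmax : ∀ e ∈ E15 n m r lit \ S,
    ¬ ∀ w : V15 n m r, ({f ∈ insert e S | w ∈ f}).ncard ≤ r)

include hS hdeg hmax

lemma fact_root (hr : 2 ≤ r) (j : Fin m) (a : Fin (r - 2)) :
    s(V15.cl j, V15.clChild j a) ∈ S := by
  have heS : s(V15.clChild j a, V15.clLeaf j a (fC j a)) ∉ S :=
    fun h => (hS h).2 (Or.inl ⟨j, a, rfl⟩)
  have hE : s(V15.clChild (n := n) j a, V15.clLeaf j a (fC j a)) ∈ E15 n m r lit :=
    Or.inr (Or.inl ⟨j, a, fC j a, rfl⟩)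
  obtain ⟨v, hv, hcard⟩ := exists_full hdeg heS (hmax _ ⟨hE, heS⟩)
  rw [Sym2.mem_iff] at hv
  rcases hv with rfl | rfl
  · have heq := Set.eq_of_subset_of_ncard_le (bstar_clChild_sub lit fC fB hS j a)
      (by rw [ncard_permClChild fC hr j a, hcard])
      ((Set.finite_singleton _).union ((Set.toFinite _).image _))
    have hmem : s(V15.cl j, V15.clChild j a) ∈
        ({s(V15.cl (n := n) j, V15.clChild j a)} : Set (Sym2 (V15 n m r))) ∪
        ((fun t => s(V15.clChild j a, V15.clLeaf j a t)) '' {t : Fin r | t ≠ fC j a}) :=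
      Or.inl rfl
    rw [← heq] at hmem
    exact hmem.1
  · rw [bstar_clLeaf_fC lit fC fB hS j a] at hcard
    simp at hcard
    omega

lemma fact_vxchild (hr : 2 ≤ r) (i : Fin n) (t : Fin r) (a : Fin (r - 1)) :
    s(V15.vx i t, V15.bChild i t a) ∈ S := by
  have heS : s(V15.bChild i t a, V15.bLeaf i t a (fB i t a)) ∉ S :=
    fun h => (hS h).2 (Or.inr (Or.inr ⟨i, t, a, rfl⟩))
  have hE : s(V15.bChild i t a, V15.bLeaf i t a (fB i t a)) ∈ E15 n m r lit :=
    Or.inr (Or.inr (Or.inr (Or.inr (Or.inr (Or.inr (Or.inl ⟨i, t, a, fB i t a, rfl⟩))))))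
  obtain ⟨v, hv, hcard⟩ := exists_full hdeg heS (hmax _ ⟨hE, heS⟩)
  rw [Sym2.mem_iff] at hv
  rcases hv with rfl | rfl
  · have heq := Set.eq_of_subset_of_ncard_le (bstar_bChild_sub lit fC fB hS i t a)
      (by rw [ncard_permBChild fB hr i t a, hcard])
      ((Set.finite_singleton _).union ((Set.toFinite _).image _))
    have hmem : s(V15.vx i t, V15.bChild i t a) ∈
        ({s(V15.vx (m := m) i t, V15.bChild i t a)} : Set (Sym2 (V15 n m r))) ∪
        ((fun u => s(V15.bChild i t a, V15.bLeaf i t a u)) '' {u : Fin r | u ≠ fB i t a}) :=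
      Or.inl rfl
    rw [← heq] at hmem
    exact hmem.1
  · rw [bstar_bLeaf_fB lit fC fB hS i t a] at hcard
    simp at hcard
    omega

lemma fact_x'_full (hr : 2 ≤ r) (i : Fin n) (hA : (star S (V15.x i)).ncard ≠ r) (t : Fin r) :
    s(V15.x' i, V15.vx i t) ∈ S := by
  have heS : s(V15.x (m := m) i, V15.x' i) ∉ S :=
    fun h => (hS h).2 (Or.inr (Or.inl ⟨i, Or.inl rfl⟩))
  have hE : s(V15.x (m := m) i, V15.x' i) ∈ E15 n m r lit :=
    Or.inr (Or.inr (Or.inr (Or.inr (Or.inl ⟨i, Or.inl rfl⟩))))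
  obtain ⟨v, hv, hcard⟩ := exists_full hdeg heS (hmax _ ⟨hE, heS⟩)
  rw [Sym2.mem_iff] at hv
  rcases hv with rfl | rfl
  · exact absurd hcard hA
  · have heq := Set.eq_of_subset_of_ncard_le (bstar_x'_sub lit fC fB hS i)
      (by rw [ncard_range_fin (by intro a b h; simpa [Sym2.eq_iff] using h), hcard])
      (Set.finite_range _)
    have hmem : s(V15.x' i, V15.vx i t) ∈
        Set.range fun t : Fin r => s(V15.x' (m := m) i, V15.vx i t) := ⟨t, rfl⟩
    rw [← heq] at hmem
    exact hmem.1

lemma fact_nx'_full (hr : 2 ≤ r) (i : Fin n) (hB : (star S (V15.nx i)).ncard ≠ r) (t : Fin r) :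
    s(V15.nx' i, V15.vx i t) ∈ S := by
  have heS : s(V15.nx (m := m) i, V15.nx' i) ∉ S :=
    fun h => (hS h).2 (Or.inr (Or.inl ⟨i, Or.inr rfl⟩))
  have hE : s(V15.nx (m := m) i, V15.nx' i) ∈ E15 n m r lit :=
    Or.inr (Or.inr (Or.inr (Or.inr (Or.inl ⟨i, Or.inr rfl⟩))))
  obtain ⟨v, hv, hcard⟩ := exists_full hdeg heS (hmax _ ⟨hE, heS⟩)
  rw [Sym2.mem_iff] at hv
  rcases hv with rfl | rfl
  · exact absurd hcard hB
  · have heq := Set.eq_of_subset_of_ncard_le (bstar_nx'_sub lit fC fB hS i)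
      (by rw [ncard_range_fin (by intro a b h; simpa [Sym2.eq_iff] using h), hcard])
      (Set.finite_range _)
    have hmem : s(V15.nx' i, V15.vx i t) ∈
        Set.range fun t : Fin r => s(V15.nx' (m := m) i, V15.vx i t) := ⟨t, rfl⟩
    rw [← heq] at hmem
    exact hmem.1

lemma fact_A_or_B (hr : 2 ≤ r) (i : Fin n) :
    (star S (V15.x i)).ncard = r ∨ (star S (V15.nx i)).ncard = r := by
  by_contra hc
  push_neg at hc
  obtain ⟨hA, hB⟩ := hc
  have t0 : Fin r := ⟨0, by omega⟩
  have hU : ({s(V15.x' i, V15.vx i t0), s(V15.nx' i, V15.vx i t0)} : Set (Sym2 (V15 n m r))) ∪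
      (Set.range fun a : Fin (r - 1) => s(V15.vx i t0, V15.bChild i t0 a)) ⊆
      star S (V15.vx i t0) := by
    rintro e ((rfl | rfl) | ⟨a, rfl⟩)
    · exact ⟨fact_x'_full lit fC fB hS hdeg hmax hr i hA t0, by simp⟩
    · exact ⟨fact_nx'_full lit fC fB hS hdeg hmax hr i hB t0, by simp⟩
    · exact ⟨fact_vxchild lit fC fB hS hdeg hmax hr i t0 a, by simp⟩
  have hfin : (star S (V15.vx i t0)).Finite :=
    Set.Finite.subset ((Set.toFinite _).union (Set.finite_range _))
      (bstar_vx_sub lit fC fB hS i t0)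
  have hcard := Set.ncard_le_ncard hU hfin
  have hUcard : (({s(V15.x' i, V15.vx i t0), s(V15.nx' i, V15.vx i t0)} :
      Set (Sym2 (V15 n m r))) ∪
      (Set.range fun a : Fin (r - 1) => s(V15.vx i t0, V15.bChild i t0 a))).ncard
      = r + 1 := by
    have hdisj : Disjoint ({s(V15.x' i, V15.vx i t0), s(V15.nx' i, V15.vx i t0)} :
        Set (Sym2 (V15 n m r)))
        (Set.range fun a : Fin (r - 1) => s(V15.vx i t0, V15.bChild i t0 a)) := by
      rw [Set.disjoint_left]
      rintro e (rfl | rfl) ⟨a, he⟩ <;> simp [Sym2.eq_iff] at he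
    rw [Set.ncard_union_eq hdisj (Set.toFinite _) (Set.finite_range _),
      Set.ncard_pair (by simp [Sym2.eq_iff]),
      ncard_range_fin (by intro a b h; simpa [Sym2.eq_iff] using h)]
    omega
  rw [hUcard] at hcard
  have := hdeg (V15.vx i t0)
  omega

lemma fact_clause (hr : 2 ≤ r)
    (hdist : ∀ j : Fin m, Function.Injective fun k : Fin 3 => (lit j k).1) (j : Fin m) :
    ∃ k : Fin 3, s(litV (r := r) lit j k, V15.cl j) ∉ S := by
  by_contra hc
  push_neg at hc
  have hU : (Set.range fun a : Fin (r - 2) => s(V15.cl (n := n) j, V15.clChild j a)) ∪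
      ((fun k => s(litV (r := r) lit j k, V15.cl j)) '' Set.univ) ⊆ star S (V15.cl j) := by
    rintro e (⟨a, rfl⟩ | ⟨k, -, rfl⟩)
    · exact ⟨fact_root lit fC fB hS hdeg hmax hr j a, by simp⟩
    · refine ⟨hc k, ?_⟩
      rcases h2 : (lit j k).2 with _ | _ <;> simp [litV, h2]
  have hfin : (star S (V15.cl j)).Finite :=
    Set.Finite.subset ((Set.finite_range _).union ((Set.toFinite _).image _))
      (bstar_cl_sub lit fC fB hS j)
  have hcard := Set.ncard_le_ncard hU hfin
  have hUcard : ((Set.range fun a : Fin (r - 2) => s(V15.cl (n := n) j, V15.clChild j a)) ∪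
      ((fun k => s(litV (r := r) lit j k, V15.cl j)) '' Set.univ)).ncard = r + 1 := by
    have hdisj : Disjoint
        (Set.range fun a : Fin (r - 2) => s(V15.cl (n := n) j, V15.clChild j a))
        ((fun k => s(litV (r := r) lit j k, V15.cl j)) '' Set.univ) := by
      rw [Set.disjoint_left]
      rintro e ⟨a, rfl⟩ ⟨k, -, he⟩
      rcases h2 : (lit j k).2 with _ | _ <;> simp [litV, h2, Sym2.eq_iff] at he
    rw [Set.ncard_union_eq hdisj (Set.finite_range _) ((Set.toFinite _).image _),
      ncard_range_fin (by intro a b h; simpa [Sym2.eq_iff] using h),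
      Set.ncard_image_of_injOn, Set.ncard_univ]
    · simp
      omega
    · intro k _ k' _ h
      simp only [Sym2.eq_iff] at h
      rcases h with ⟨h1, -⟩ | ⟨h1, h2⟩
      · exact litV_inj lit hdist h1
      · exact absurd h1 (litV_ne_cl lit j j k)
  rw [hUcard] at hcard
  have := hdeg (V15.cl j)
  omega

lemma fact_x_full (hr : 2 ≤ r)
    (hdist : ∀ j : Fin m, Function.Injective fun k : Fin 3 => (lit j k).1) (i : Fin n)
    (hpos : (Finset.univ.filter fun p : Fin m × Fin 3 => lit p.1 p.2 = (i, true)).card = 2)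
    (hA : (star S (V15.x i)).ncard = r) {j : Fin m} {k : Fin 3} (hl : lit j k = (i, true)) :
    s(V15.x i, V15.cl j) ∈ S := by
  have heq := Set.eq_of_subset_of_ncard_le (bstar_x_sub lit fC fB hS i)
    (by rw [ncard_permX lit hr hdist i hpos, hA])
    ((Set.finite_range _).union ((Set.toFinite _).image _))
  have hmem : s(V15.x i, V15.cl j) ∈
      (Set.range fun a : Fin (r - 2) => s(V15.x (m := m) i, V15.xPend i a)) ∪
      ((fun p : Fin m × Fin 3 => s(V15.x (r := r) i, V15.cl p.1)) ''
        {p : Fin m × Fin 3 | lit p.1 p.2 = (i, true)}) :=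
    Or.inr ⟨(j, k), hl, rfl⟩
  rw [← heq] at hmem
  exact hmem.1

lemma fact_nx_full (hr : 2 ≤ r)
    (hdist : ∀ j : Fin m, Function.Injective fun k : Fin 3 => (lit j k).1) (i : Fin n)
    (hneg : (Finset.univ.filter fun p : Fin m × Fin 3 => lit p.1 p.2 = (i, false)).card = 2)
    (hB : (star S (V15.nx i)).ncard = r) {j : Fin m} {k : Fin 3} (hl : lit j k = (i, false)) :
    s(V15.nx i, V15.cl j) ∈ S := by
  have heq := Set.eq_of_subset_of_ncard_le (bstar_nx_sub lit fC fB hS i)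
    (by rw [ncard_permNx lit hr hdist i hneg, hB])
    ((Set.finite_range _).union ((Set.toFinite _).image _))
  have hmem : s(V15.nx i, V15.cl j) ∈
      (Set.range fun a : Fin (r - 2) => s(V15.nx (m := m) i, V15.nxPend i a)) ∪
      ((fun p : Fin m × Fin 3 => s(V15.nx (r := r) i, V15.cl p.1)) ''
        {p : Fin m × Fin 3 | lit p.1 p.2 = (i, false)}) :=
    Or.inr ⟨(j, k), hl, rfl⟩
  rw [← heq] at hmem
  exact hmem.1


end Bwd

end Stmt15


/-- a (3,B2)-SAT instance is satisfiable iff the constructed graph has a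
maximal r-DCPS set consisting of permitted edges only. -/
theorem stmt_15 (r n m : ℕ) (hr : 2 ≤ r) (lit : Fin m → Fin 3 → Fin n × Bool)
    (hdist : ∀ j : Fin m, Function.Injective fun k : Fin 3 => (lit j k).1)
    (hpos : ∀ v : Fin n,
      (Finset.univ.filter fun p : Fin m × Fin 3 => lit p.1 p.2 = (v, true)).card = 2)
    (hneg : ∀ v : Fin n,
      (Finset.univ.filter fun p : Fin m × Fin 3 => lit p.1 p.2 = (v, false)).card = 2)
    (fC : Fin m → Fin (r - 2) → Fin r)
    (fB : Fin n → Fin r → Fin (r - 1) → Fin r) :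
    (∃ T : Fin n → Bool, ∀ j : Fin m, ∃ k : Fin 3, T (lit j k).1 = (lit j k).2) ↔
      (∃ S : Set (Sym2 (V15 n m r)),
        S ⊆ E15 n m r lit \ Forb15 n m r fC fB ∧
        (∀ v : V15 n m r, ({e ∈ S | v ∈ e}).ncard ≤ r) ∧
        ∀ e ∈ E15 n m r lit \ S,
          ¬ ∀ v : V15 n m r, ({f ∈ insert e S | v ∈ f}).ncard ≤ r) := by
  classical
  constructor
  · rintro ⟨T, hT⟩
    choose K hK using hT
    refine ⟨Stmt15.SF lit fC fB T K, Stmt15.SF_subset lit fC fB T K,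
      fun v => Stmt15.SF_deg_le lit fC fB T K hr hdist hpos hneg v, ?_⟩
    rintro e ⟨he, heS⟩
    exact Stmt15.SF_max lit fC fB T K hr hdist hpos hneg hK he heS
  · rintro ⟨S, hS, hdeg, hmax⟩
    have hdeg' : ∀ v : V15 n m r, (Stmt15.star S v).ncard ≤ r := hdeg
    refine ⟨fun i => if (Stmt15.star S (V15.x i)).ncard = r then false else true, ?_⟩
    intro j
    obtain ⟨k, hk⟩ := Stmt15.fact_clause lit fC fB hS hdeg' hmax hr hdist j
    refine ⟨k, ?_⟩
    rcases h2 : (lit j k).2 with _ | _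
    · have hl : lit j k = ((lit j k).1, false) := Prod.ext rfl h2
      have hk' : s(V15.nx (lit j k).1, V15.cl j) ∉ S := by
        simpa [Stmt15.litV, h2] using hk
      have hA : (Stmt15.star S (V15.x (lit j k).1)).ncard = r :=
        (Stmt15.fact_A_or_B lit fC fB hS hdeg' hmax hr (lit j k).1).resolve_right
          (fun hB => hk' (Stmt15.fact_nx_full lit fC fB hS hdeg' hmax hr hdist _
            (hneg _) hB hl))
      simp [hA, h2]
    · have hl : lit j k = ((lit j k).1, true) := Prod.ext rfl h2
      have hk' : s(V15.x (lit j k).1, V15.cl j) ∉ S := by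
        simpa [Stmt15.litV, h2] using hk
      have hA : (Stmt15.star S (V15.x (lit j k).1)).ncard ≠ r := fun hA =>
        hk' (Stmt15.fact_x_full lit fC fB hS hdeg' hmax hr hdist _ (hpos _) hA hl)
      simp [hA, h2]
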